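/- Let X be a one-sided shift space and T_X its hom tree-shift. Then T_X is uniform CPC-block gluing (CPC UBG) if and only if T_X is block gluing (BG). -/

import Mathlib

namespace TreeShiftPaper

/-- Words over the alphabet `Σ = {0, …, k-1}`: nodes of the `k`-tree. -/
abbrev Word (k : ℕ) := List (Fin k)

variable {k : ℕ} {A : Type*}

/-- A set of words is prefix-closed if it contains every prefix of each of its elements. -/
def PrefixClosed (S : Set (Word k)) : Prop :=
  ∀ w ∈ S, ∀ v : Word k, v <+: w → v ∈ S

/-- The pattern with support `S` and labels `u` appears in the labeled tree `t`. -/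
def PatternAppears (t : Word k → A) (S : Set (Word k)) (u : Word k → A) : Prop :=
  ∃ s : Word k, ∀ w ∈ S, t (s ++ w) = u w

/-- The set of labeled trees avoiding every pattern of the forbidden family `F`. -/
def treeShiftOf (F : Set ((Set (Word k)) × (Word k → A))) : Set (Word k → A) :=
  {t | ∀ p ∈ F, ¬ PatternAppears t p.1 p.2}

/-- `T` is a tree-shift: it is defined by some forbidden set of patterns
(each with finite prefix-closed support). -/
def IsTreeShift (T : Set (Word k → A)) : Prop :=
  ∃ F : Set ((Set (Word k)) × (Word k → A)),
    (∀ p ∈ F, p.1.Finite ∧ PrefixClosed p.1) ∧ T = treeShiftOf F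

/-- `T` is a tree-shift of finite type: the forbidden set can be chosen finite. -/
def IsTreeSFT (T : Set (Word k → A)) : Prop :=
  ∃ F : Set ((Set (Word k)) × (Word k → A)),
    F.Finite ∧ (∀ p ∈ F, p.1.Finite ∧ PrefixClosed p.1) ∧ T = treeShiftOf F

/-- The finite word `w` occurs in the one-sided sequence `x` at position `i`. -/
def OccursAt (x : ℕ → A) (i : ℕ) (w : List A) : Prop :=
  ∀ j : Fin w.length, x (i + (j : ℕ)) = w.get j

/-- The one-sided shift space defined by the forbidden set of words `F`. -/
def shiftOf (F : Set (List A)) : Set (ℕ → A) :=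
  {x | ∀ w ∈ F, ∀ i : ℕ, ¬ OccursAt x i w}

/-- `X` is a one-sided shift space. -/
def IsShift (X : Set (ℕ → A)) : Prop := ∃ F : Set (List A), X = shiftOf F

/-- `X` is a one-sided shift of finite type. -/
def IsSFT (X : Set (ℕ → A)) : Prop :=
  ∃ F : Set (List A), F.Finite ∧ X = shiftOf F

/-- A chain: an infinite path in the tree starting at the root. -/
def IsChain (c : ℕ → Word k) : Prop :=
  c 0 = [] ∧ ∀ n : ℕ, ∃ i : Fin k, c (n + 1) = c n ++ [i]

/-- The hom tree-shift associated with a one-sided shift space `X`: labeled trees whose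
projection along every chain lies in `X`. -/
def homTree (k : ℕ) (X : Set (ℕ → A)) : Set (Word k → A) :=
  {t | ∀ c : ℕ → Word k, IsChain c → (fun n => t (c n)) ∈ X}

/-- `Y` is a sofic one-sided shift: image of an SFT under a sliding block code induced
by an `n`-block map. -/
def IsSofic (Y : Set (ℕ → A)) : Prop :=
  ∃ (B : Type) (_ : Fintype B) (X : Set (ℕ → B)) (n : ℕ) (f : (ℕ → B) → A),
    IsSFT X ∧ (∀ u v : ℕ → B, (∀ j < n, u j = v j) → f u = f v) ∧
    (fun x : ℕ → B => fun i => f (fun j => x (i + j))) '' X = Y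

/-- `T` is a sofic tree-shift: image of a tree-SFT under the map induced by an
`n`-block map. -/
def IsSoficTree (T : Set (Word k → A)) : Prop :=
  ∃ (B : Type) (_ : Fintype B) (T' : Set (Word k → B)) (n : ℕ) (g : (Word k → B) → A),
    IsTreeSFT T' ∧
    (∀ u v : Word k → B, (∀ w : Word k, w.length ≤ n → u w = v w) → g u = g v) ∧
    (fun t : Word k → B => fun w => g (fun z => t (w ++ z))) '' T' = T

/-- The Markov tree-shift determined by `k` binary `d × d` transition matrices. -/
def markovTree (k d : ℕ) (M : Fin k → Matrix (Fin d) (Fin d) Bool) :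
    Set (Word k → Fin d) :=
  {t | ∀ w : Word k, ∀ i : Fin k, M i (t w) (t (w ++ [i])) = true}

/-- The one-sided Markov (vertex) shift determined by a binary `d × d` matrix. -/
def markovShift (d : ℕ) (M : Matrix (Fin d) (Fin d) Bool) : Set (ℕ → Fin d) :=
  {x | ∀ i : ℕ, M (x i) (x (i + 1)) = true}

/-- The pattern with support `S` and labels `u` is admissible in `T`. -/
def AdmissiblePattern (T : Set (Word k → A)) (S : Set (Word k)) (u : Word k → A) : Prop :=
  ∃ t ∈ T, ∃ s : Word k, ∀ w ∈ S, t (s ++ w) = u w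

/-- The `n`-block `u` (a labeling of `Δ_n`) is admissible in `T`. -/
def AdmissibleBlock (T : Set (Word k → A)) (n : ℕ) (u : Word k → A) : Prop :=
  ∃ t ∈ T, ∃ s : Word k, ∀ w : Word k, w.length ≤ n → t (s ++ w) = u w

/-- Word distance on the `k`-tree:
`d(x,y) = |x| + |y| - 2 · max{|w| : w` a common prefix of `x` and `y}`. -/
noncomputable def wordDist (x y : Word k) : ℕ :=
  x.length + y.length - 2 * sSup {m : ℕ | ∃ w : Word k, w <+: x ∧ w <+: y ∧ w.length = m}

/-- The boundary `∂S = {w ∈ S : wΣ ∩ S = ∅}` of a support `S`. -/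
def boundary (S : Set (Word k)) : Set (Word k) :=
  {w | w ∈ S ∧ ∀ i : Fin k, w ++ [i] ∉ S}

/-- A complete prefix code: a finite prefix set such that every word of length at least
`max_{z ∈ P} |z|` has a prefix in `P`. -/
def IsCPC (P : Set (Word k)) : Prop :=
  P.Finite ∧ (∀ x ∈ P, ∀ y ∈ P, x <+: y → x = y) ∧
  ∀ w : Word k, (∀ z ∈ P, z.length ≤ w.length) → ∃ x ∈ P, x <+: w

/-- Strong irreducibility with gap `N`. -/
def SIGap (T : Set (Word k → A)) (N : ℕ) : Prop :=
  ∀ (Su Sv : Set (Word k)) (u v : Word k → A),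
    Su.Finite → PrefixClosed Su → Sv.Finite → PrefixClosed Sv →
    AdmissiblePattern T Su u → AdmissiblePattern T Sv v →
    ∀ w : Word k, (∀ h ∈ Su, N ≤ wordDist w h) →
      ∃ t ∈ T, (∀ z ∈ Su, t z = u z) ∧ ∀ z ∈ Sv, t (w ++ z) = v z

/-- `T` is strongly irreducible (SI). -/
def SI (T : Set (Word k → A)) : Prop := ∃ N : ℕ, SIGap T N

/-- `T` is block gluing (BG). -/
def BG (T : Set (Word k → A)) : Prop :=
  ∃ N : ℕ, ∀ (n m : ℕ) (u v : Word k → A),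
    AdmissibleBlock T n u → AdmissibleBlock T m v →
    ∀ w : Word k, N + n ≤ w.length →
      ∃ t ∈ T, (∀ z : Word k, z.length ≤ n → t z = u z) ∧
        ∀ z : Word k, z.length ≤ m → t (w ++ z) = v z

/-- `T` is topologically mixing (TM). -/
def TM (T : Set (Word k → A)) : Prop :=
  ∀ H₁ H₂ : Set (Word k), H₁.Finite → H₂.Finite →
    ∃ N : ℕ, ∀ t₁ ∈ T, ∀ t₂ ∈ T, ∀ w : Word k, (∀ h ∈ H₁, N ≤ wordDist w h) →
      ∃ t ∈ T, (∀ z ∈ H₁, t z = t₁ z) ∧ ∀ z ∈ H₂, t (w ++ z) = t₂ z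

/-- `T` is irreducible (IR). -/
def IR (T : Set (Word k → A)) : Prop :=
  ∀ (n m : ℕ) (u v : Word k → A),
    AdmissibleBlock T n u → AdmissibleBlock T m v →
    ∃ w : Word k, n < w.length ∧
      ∃ t ∈ T, (∀ z : Word k, z.length ≤ n → t z = u z) ∧
        ∀ z : Word k, z.length ≤ m → t (w ++ z) = v z

/-- `T` is CPC-strongly irreducible via the prefix set `P`. -/
def CPCSIWith (T : Set (Word k → A)) (P : Set (Word k)) : Prop :=
  ∀ (Su Sv : Set (Word k)) (u v : Word k → A),
    Su.Finite → PrefixClosed Su → Sv.Finite → PrefixClosed Sv →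
    AdmissiblePattern T Su u → AdmissiblePattern T Sv v →
    ∃ t ∈ T, (∀ z ∈ Su, t z = u z) ∧
      ∀ w ∈ boundary Su, ∀ z ∈ P, ∀ y ∈ Sv, t (w ++ z ++ y) = v y

/-- `T` is CPC-strongly irreducible (CPC SI). -/
def CPCSI (T : Set (Word k → A)) : Prop := ∃ P : Set (Word k), IsCPC P ∧ CPCSIWith T P

/-- `T` is uniform CPC-strongly irreducible (CPC USI): CPC SI with `P = Σ^N`. -/
def CPCUSI (T : Set (Word k → A)) : Prop :=
  ∃ N : ℕ, CPCSIWith T {z : Word k | z.length = N}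

/-- `T` is CPC-block gluing via the prefix set `P`. -/
def CPCBGWith (T : Set (Word k → A)) (P : Set (Word k)) : Prop :=
  ∀ (n m : ℕ) (u v : Word k → A),
    AdmissibleBlock T n u → AdmissibleBlock T m v →
    ∃ t ∈ T, (∀ z : Word k, z.length ≤ n → t z = u z) ∧
      ∀ w : Word k, w.length = n → ∀ z ∈ P, ∀ y : Word k, y.length ≤ m →
        t (w ++ z ++ y) = v y

/-- `T` is CPC-block gluing (CPC BG). -/
def CPCBG (T : Set (Word k → A)) : Prop := ∃ P : Set (Word k), IsCPC P ∧ CPCBGWith T P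

/-- `T` is uniform CPC-block gluing (CPC UBG): CPC BG with `P = Σ^N`. -/
def CPCUBG (T : Set (Word k → A)) : Prop :=
  ∃ N : ℕ, CPCBGWith T {z : Word k | z.length = N}

/-- `T` is CPC-irreducible (CPC IR). -/
def CPCIR (T : Set (Word k → A)) : Prop :=
  ∀ (n m : ℕ) (u v : Word k → A),
    AdmissibleBlock T n u → AdmissibleBlock T m v →
    ∃ P : Set (Word k), IsCPC P ∧ (∀ z ∈ P, n + 1 ≤ z.length) ∧
      ∃ t ∈ T, (∀ z : Word k, z.length ≤ n → t z = u z) ∧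
        ∀ w ∈ P, ∀ y : Word k, y.length ≤ m → t (w ++ y) = v y

/-- The finite word `u` is admissible in the one-sided shift space `X`. -/
def WordAdmissible (X : Set (ℕ → A)) (u : List A) : Prop :=
  ∃ x ∈ X, ∃ i : ℕ, OccursAt x i u

/-- The one-sided shift space `X` is topologically mixing. -/
def MixingShift (X : Set (ℕ → A)) : Prop :=
  ∀ u v : List A, WordAdmissible X u → WordAdmissible X v →
    ∃ N : ℕ, ∀ n ≥ N, ∃ x ∈ X, OccursAt x 0 u ∧ OccursAt x (u.length + n) v

/-- The one-sided shift space `X` is transitive (irreducible). -/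
def TransitiveShift (X : Set (ℕ → A)) : Prop :=
  ∀ u v : List A, WordAdmissible X u → WordAdmissible X v →
    ∃ x ∈ X, ∃ n : ℕ, u.length ≤ n ∧ OccursAt x 0 u ∧ OccursAt x n v

end TreeShiftPaper

namespace TreeShiftPaper

lemma isChain_length {k : ℕ} {c : ℕ → Word k} (hc : IsChain c) : ∀ j, (c j).length = j := by
  intro j
  induction j with
  | zero => simp [hc.1]
  | succ j ih =>
    obtain ⟨i, hi⟩ := hc.2 j
    simp [hi, ih]

lemma isChain_prefix {k : ℕ} {c : ℕ → Word k} (hc : IsChain c) {i j : ℕ} (h : i ≤ j) :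
    c i <+: c j := by
  induction j, h using Nat.le_induction with
  | base => exact List.prefix_refl _
  | succ j hij ih =>
    obtain ⟨a, ha⟩ := hc.2 j
    rw [ha]
    exact ih.trans (List.prefix_append _ _)

lemma isChain_decomp {k : ℕ} {c : ℕ → Word k} (hc : IsChain c) {n j : ℕ} (h : n ≤ j) :
    c j = c n ++ (c j).drop n := by
  obtain ⟨s, hs⟩ := isChain_prefix hc h
  have hn : (c n).length = n := isChain_length hc n
  rw [← hs, List.drop_left' hn]

/-- The "branch collapsing" substitution `ψ r = z₀.take |r| ++ r.drop |z₀|` maps a word to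
the word obtained by replacing its first `|z₀|` letters by the corresponding prefix of `z₀`.
Appending one letter to `r` appends one letter to `ψ r`. -/
lemma psi_snoc {k : ℕ} (z₀ r : Word k) (i : Fin k) :
    ∃ a : Fin k, z₀.take (r ++ [i]).length ++ (r ++ [i]).drop z₀.length
      = (z₀.take r.length ++ r.drop z₀.length) ++ [a] := by
  rcases lt_or_ge r.length z₀.length with h | h
  · refine ⟨z₀.get ⟨r.length, h⟩, ?_⟩
    rw [List.drop_eq_nil_of_le (by simp; omega), List.drop_eq_nil_of_le (by omega)]
    simp only [List.append_nil, List.length_append, List.length_singleton]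
    rw [← List.take_concat_get h, List.concat_eq_append]
    simp
  · refine ⟨i, ?_⟩
    rw [List.take_of_length_le (by simp; omega), List.take_of_length_le (by omega),
        List.drop_append_of_le_length h, List.append_assoc]

/-- The key construction: given, for every word `w` of length `n`, a tree `tw w` in the hom
tree-shift whose `Δ_n`-restriction is `u` and which carries a copy of `v` at position
`w ++ z₀`, one can assemble a single tree of the hom tree-shift with top `u` and copies of
`v` at **all** positions `w ++ z` with `|w| = n`, `|z| = |z₀|`. -/
lemma backward_aux {k n m : ℕ} {A : Type*} {X : Set (ℕ → A)} (z₀ : Word k)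
    (u v : Word k → A) (tw : Word k → (Word k → A))
    (hT : ∀ w, tw w ∈ homTree k X)
    (htop : ∀ w : Word k, w.length = n → ∀ z : Word k, z.length ≤ n → tw w z = u z)
    (hstamp : ∀ w : Word k, w.length = n →
      ∀ y : Word k, y.length ≤ m → tw w (w ++ z₀ ++ y) = v y) :
    ∃ t ∈ homTree k X, (∀ z : Word k, z.length ≤ n → t z = u z) ∧
      ∀ w : Word k, w.length = n → ∀ z : Word k, z.length = z₀.length →
        ∀ y : Word k, y.length ≤ m → t (w ++ z ++ y) = v y := by
  classical
  -- the substitution collapsing the first `|z₀|` levels below depth `n` onto `z₀`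
  set ψ : Word k → Word k := fun r => z₀.take r.length ++ r.drop z₀.length with hψdef
  set t : Word k → A := fun x =>
    if x.length ≤ n then u x else tw (x.take n) (x.take n ++ ψ (x.drop n)) with htdef
  have htval1 : ∀ x : Word k, x.length ≤ n → t x = u x := by
    intro x hx; simp only [htdef]; rw [if_pos hx]
  have htval2 : ∀ x : Word k, n < x.length →
      t x = tw (x.take n) (x.take n ++ ψ (x.drop n)) := by
    intro x hx; simp only [htdef]; rw [if_neg (by omega)]
  have hψsnoc : ∀ (r : Word k) (i : Fin k), ∃ a : Fin k, ψ (r ++ [i]) = ψ r ++ [a] := by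
    intro r i
    obtain ⟨a, ha⟩ := psi_snoc z₀ r i
    exact ⟨a, ha⟩
  refine ⟨t, ?_, fun z hz => htval1 z hz, ?_⟩
  · -- membership in the hom tree-shift
    intro c hc
    have hlen := isChain_length hc
    set wc := c n with hwc
    have hwclen : wc.length = n := hlen n
    set c' : ℕ → Word k := fun j => if j ≤ n then c j else wc ++ ψ ((c j).drop n) with hc'def
    have hc' : IsChain c' := by
      constructor
      · simp only [hc'def]
        rw [if_pos (Nat.zero_le n)]
        exact hc.1
      · intro j
        obtain ⟨i, hi⟩ := hc.2 j
        rcases lt_trichotomy j n with h | h | h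
        · refine ⟨i, ?_⟩
          simp only [hc'def]
          rw [if_pos (by omega), if_pos (by omega), hi]
        · subst h
          have hdrop : (c (j + 1)).drop j = [i] := by
            rw [hi, List.drop_left' (hlen j)]
          obtain ⟨a, ha⟩ := hψsnoc [] i
          refine ⟨a, ?_⟩
          simp only [hc'def]
          rw [if_neg (by omega), if_pos le_rfl, hdrop]
          have : ψ [i] = ψ ([] ++ [i]) := by simp
          rw [this, ha]
          have hψnil : ψ ([] : Word k) = [] := by simp [hψdef]
          rw [hψnil, ← hwc]
          simp [List.append_assoc]
        · have hdrop : (c (j + 1)).drop n = (c j).drop n ++ [i] := by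
            rw [hi, List.drop_append_of_le_length (by rw [hlen]; omega)]
          obtain ⟨a, ha⟩ := hψsnoc ((c j).drop n) i
          refine ⟨a, ?_⟩
          simp only [hc'def]
          rw [if_neg (by omega), if_neg (by omega), hdrop, ha]
          simp [hψdef, List.append_assoc]
    have hval : ∀ j, t (c j) = tw wc (c' j) := by
      intro j
      rcases le_or_gt j n with h | h
      · have hcj : c' j = c j := by simp only [hc'def]; rw [if_pos h]
        rw [hcj, htval1 _ (by rw [hlen]; exact h)]
        exact ((htop wc hwclen) (c j) (by rw [hlen]; exact h)).symm
      · have hxlen : n < (c j).length := by rw [hlen]; exact h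
        rw [htval2 _ hxlen]
        have hdecomp : c j = wc ++ (c j).drop n := isChain_decomp hc h.le
        have htake : (c j).take n = wc := by
          conv_lhs => rw [hdecomp]
          exact List.take_left' hwclen
        rw [htake]
        congr 1
        simp only [hc'def]
        rw [if_neg (by omega)]
    have : (fun j => t (c j)) = fun j => tw wc (c' j) := funext hval
    rw [this]
    exact hT wc c' hc'
  · -- the stamped copies of `v`
    intro w hw z hz y hy
    by_cases hcase : (w ++ z ++ y).length ≤ n
    · -- degenerate case : `z₀ = []`, `z = []`, `y = []`
      have hlens : w.length + (z.length + y.length) ≤ n := by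
        simpa [List.length_append] using hcase
      have hz0 : z = [] := List.length_eq_zero_iff.mp (by omega)
      have hy0 : y = [] := List.length_eq_zero_iff.mp (by omega)
      have hz₀0 : z₀ = [] := List.length_eq_zero_iff.mp (by omega)
      subst hz0; subst hy0
      have h1 := hstamp w hw [] (by simp)
      rw [hz₀0] at h1
      simp only [List.append_nil] at h1 ⊢
      rw [htval1 w (le_of_eq hw), ← htop w hw w (le_of_eq hw), h1]
    · rw [htval2 _ (by omega)]
      have htake : (w ++ z ++ y).take n = w := by
        rw [List.append_assoc]; exact List.take_left' hw
      have hdrop : (w ++ z ++ y).drop n = z ++ y := by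
        rw [List.append_assoc]; exact List.drop_left' hw
      have hψzy : ψ (z ++ y) = z₀ ++ y := by
        simp only [hψdef]
        rw [List.take_of_length_le (by rw [List.length_append, ← hz]; omega),
          List.drop_left' hz]
      rw [htake, hdrop, hψzy, ← List.append_assoc]
      exact hstamp w hw y hy

/-- For a hom tree-shift `T_X`: uniform CPC-block gluing is equivalent to block
gluing. -/
theorem stmt11 {k : ℕ} (hk : 2 ≤ k) {A : Type*} [Fintype A] (X : Set (ℕ → A))
    (hX : IsShift X) : CPCUBG (homTree k X) ↔ BG (homTree k X) := by
  constructor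
  · -- CPC UBG ⇒ BG
    rintro ⟨N, hP⟩
    refine ⟨N, ?_⟩
    intro n m u v hu hv w hw
    obtain ⟨tu, htuT, s, hs⟩ := hu
    have hu' : AdmissibleBlock (homTree k X) (w.length - N) (fun x => tu (s ++ x)) :=
      ⟨tu, htuT, s, fun _ _ => rfl⟩
    obtain ⟨t, htT, h1, h2⟩ := hP (w.length - N) m _ v hu' hv
    refine ⟨t, htT, ?_, ?_⟩
    · intro z hz
      rw [h1 z (by omega), hs z hz]
    · intro z hz
      have h3 := h2 (w.take (w.length - N)) (by simp only [List.length_take]; omega)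
        (w.drop (w.length - N)) (by simp only [Set.mem_setOf_eq, List.length_drop]; omega) z hz
      rwa [List.take_append_drop] at h3
  · -- BG ⇒ CPC UBG
    rintro ⟨N, hBG⟩
    refine ⟨N, ?_⟩
    intro n m u v hu hv
    classical
    have hk0 : 0 < k := by omega
    set z₀ : Word k := List.replicate N ⟨0, hk0⟩ with hz₀
    have hz₀len : z₀.length = N := List.length_replicate
    obtain ⟨t₀, ht₀T, -⟩ := id hu
    have H : ∀ w : Word k, ∃ tt, tt ∈ homTree k X ∧ (w.length = n →
        (∀ z : Word k, z.length ≤ n → tt z = u z) ∧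
        ∀ y : Word k, y.length ≤ m → tt (w ++ z₀ ++ y) = v y) := by
      intro w
      by_cases hw : w.length = n
      · obtain ⟨tt, httT, hA, hB⟩ := hBG n m u v hu hv (w ++ z₀)
          (by simp only [List.length_append, hz₀len, hw]; omega)
        exact ⟨tt, httT, fun _ => ⟨hA, hB⟩⟩
      · exact ⟨t₀, ht₀T, fun h => absurd h hw⟩
    choose tw hT hPw using H
    obtain ⟨t, htT, h1, h2⟩ := backward_aux z₀ u v tw hT
      (fun w hw => (hPw w hw).1) (fun w hw => (hPw w hw).2)
    refine ⟨t, htT, h1, ?_⟩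
    intro w hw z hz y hy
    exact h2 w hw z (by simpa [hz₀len] using hz) y hy

end TreeShiftPaper
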